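/- If X is a universal cycle on 2-subsets of [n] and X' is obtained from X by repeating the first occurrence of each letter (i.e., replacing that character a by aa), then X' is a universal cycle on 2-multisets of [n]. -/

import Mathlib

/-- The cyclic `t`-window of the string `w` starting at position `i`, as a multiset. -/
def cycWindow (w : List ℕ) (t i : ℕ) : Multiset ℕ :=
  ((List.range t).map (fun j => w.getD ((i + j) % w.length) 0) : List ℕ)

/-- The list of all cyclic `t`-windows of the string `w`. -/
def cycWindows (w : List ℕ) (t : ℕ) : List (Multiset ℕ) :=
  (List.range w.length).map (cycWindow w t)

/-- The list of all (non-cyclic) `t`-windows of the linear string `w`. -/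
def linWindows (w : List ℕ) (t : ℕ) : List (Multiset ℕ) :=
  (List.range (w.length + 1 - t)).map
    (fun i => ((List.range t).map (fun j => w.getD (i + j) 0) : List ℕ))

/-- `w` is a universal cycle on `t`-multisets over `[n] = {1,…,n}`. -/
def IsUcycle (n t : ℕ) (w : List ℕ) : Prop :=
  w ≠ [] ∧ (∀ x ∈ w, x ∈ Finset.Icc 1 n) ∧ (cycWindows w t).Nodup ∧
  ∀ m : Multiset ℕ, m ∈ cycWindows w t ↔
    (Multiset.card m = t ∧ ∀ x ∈ m, x ∈ Finset.Icc 1 n)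

/-- `w` is a universal cycle on `t`-subsets of `[n] = {1,…,n}`. -/
def IsUcycleSet (n t : ℕ) (w : List ℕ) : Prop :=
  w ≠ [] ∧ (∀ x ∈ w, x ∈ Finset.Icc 1 n) ∧ (cycWindows w t).Nodup ∧
  ∀ m : Multiset ℕ, m ∈ cycWindows w t ↔
    (m.Nodup ∧ Multiset.card m = t ∧ ∀ x ∈ m, x ∈ Finset.Icc 1 n)

/-- The unordered pair `{x,y}` appears as (cyclically) consecutive characters of `w`. -/
def ConsecPair (w : List ℕ) (x y : ℕ) : Prop :=
  ∃ i < w.length, ({w.getD i 0, w.getD ((i + 1) % w.length) 0} : Multiset ℕ) = {x, y}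

/-- Duplicate the first occurrence of each letter in a list (first argument is the
set of letters already seen). -/
def dupFirsts : List ℕ → List ℕ → List ℕ
  | _, [] => []
  | seen, a :: l =>
      if a ∈ seen then a :: dupFirsts seen l
      else a :: a :: dupFirsts (a :: seen) l


def pairs : List ℕ → ℕ → List (Multiset ℕ)
  | [], _ => []
  | a :: l, c => ({a, (l ++ [c]).getD 0 0} : Multiset ℕ) :: pairs l c

def news : List ℕ → List ℕ → List ℕ
  | _, [] => []
  | seen, a :: l => if a ∈ seen then news seen l else a :: news (a :: seen) l

lemma pairs_eq (u : List ℕ) (c : ℕ) :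
    pairs u c = (List.range u.length).map
      (fun i => ({u.getD i 0, (u ++ [c]).getD (i+1) 0} : Multiset ℕ)) := by
  induction u with
  | nil => rfl
  | cons a l ih =>
    rw [pairs, List.length_cons, List.range_succ_eq_map, List.map_cons, List.map_map]
    congr 1


lemma cycWindow_two (u : List ℕ) (i : ℕ) (hi : i < u.length) :
    cycWindow u 2 i = ({u.getD i 0, u.getD ((i+1) % u.length) 0} : Multiset ℕ) := by
  have h2 : List.range 2 = [0, 1] := by decide
  rw [cycWindow, h2]
  simp only [List.map_cons, List.map_nil, Nat.add_zero, Nat.mod_eq_of_lt hi]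
  rfl

lemma cycWindows_eq_pairs (u : List ℕ) (hu : u ≠ []) :
    cycWindows u 2 = pairs u (u.getD 0 0) := by
  rw [pairs_eq, cycWindows]
  apply List.map_congr_left
  intro i hi
  rw [List.mem_range] at hi
  rw [cycWindow_two u i hi]
  congr 1
  rcases Nat.lt_or_ge (i+1) u.length with h | h
  · rw [Nat.mod_eq_of_lt h, List.getD_append _ _ _ _ h]
  · have h2 : i + 1 = u.length := by omega
    rw [h2, Nat.mod_self, List.getD_append_right _ _ _ _ (le_refl _)]
    simp

lemma dupFirsts_head (seen l : List ℕ) (c : ℕ) :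
    ((dupFirsts seen l) ++ [c]).getD 0 0 = (l ++ [c]).getD 0 0 := by
  cases l with
  | nil => rfl
  | cons a l => rw [dupFirsts]; split <;> rfl

lemma mem_dupFirsts (l : List ℕ) (x : ℕ) : ∀ seen, x ∈ dupFirsts seen l ↔ x ∈ l := by
  induction l with
  | nil => intro seen; rfl
  | cons a l ih =>
    intro seen
    rw [dupFirsts]
    split <;> simp [ih]

lemma mem_news (l : List ℕ) (x : ℕ) : ∀ seen, x ∈ news seen l ↔ x ∈ l ∧ x ∉ seen := by
  induction l with
  | nil => intro seen; simp [news]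
  | cons a l ih =>
    intro seen
    rw [news]
    split
    · rename_i h
      rw [ih]
      constructor
      · rintro ⟨h1, h2⟩; exact ⟨List.mem_cons_of_mem _ h1, h2⟩
      · rintro ⟨h1, h2⟩
        rcases List.mem_cons.1 h1 with rfl | h1
        · exact absurd h h2
        · exact ⟨h1, h2⟩
    · rename_i h
      simp only [List.mem_cons, ih]
      by_cases hxa : x = a <;> simp [hxa] <;> tauto

lemma nodup_news (l : List ℕ) : ∀ seen, (news seen l).Nodup := by
  induction l with
  | nil => intro seen; simp [news]
  | cons a l ih =>
    intro seen
    rw [news]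
    split
    · exact ih seen
    · refine List.Nodup.cons ?_ (ih _)
      intro hmem
      rw [mem_news] at hmem
      exact hmem.2 List.mem_cons_self

lemma pairs_dupFirsts (c : ℕ) (l : List ℕ) : ∀ seen,
    (pairs (dupFirsts seen l) c).Perm
      ((news seen l).map (fun x => ({x, x} : Multiset ℕ)) ++ pairs l c) := by
  induction l with
  | nil => intro seen; simp [dupFirsts, news]
  | cons a l ih =>
    intro seen
    rw [dupFirsts, news]
    split
    · rw [pairs, pairs, dupFirsts_head]
      exact ((ih seen).cons _).trans List.perm_middle.symm
    · rw [pairs, pairs, pairs, dupFirsts_head]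
      simp only [List.map_cons, List.cons_append, List.getD_cons_zero]
      exact (((ih _).cons _).trans List.perm_middle.symm).cons _

lemma getD_zero_append (u : List ℕ) (c : ℕ) (h : u ≠ []) :
    (u ++ [c]).getD 0 0 = u.getD 0 0 := by
  cases u with
  | nil => exact absurd rfl h
  | cons a l => rfl

lemma mem_of_mem_cycWindow (w : List ℕ) (hw : w ≠ []) (m : Multiset ℕ)
    (hm : m ∈ cycWindows w 2) (x : ℕ) (hx : x ∈ m) : x ∈ w := by
  obtain ⟨i, _, rfl⟩ := List.mem_map.1 hm
  rw [cycWindow, Multiset.mem_coe, List.mem_map] at hx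
  obtain ⟨j, _, rfl⟩ := hx
  have hlen : 0 < w.length := List.length_pos_iff.2 hw
  have hlt : (i + j) % w.length < w.length := Nat.mod_lt _ hlen
  rw [List.getD_eq_getElem _ _ hlt]
  exact List.getElem_mem _

theorem dupFirsts_ucycle (n : ℕ) (w : List ℕ) (hw : IsUcycleSet n 2 w) :
    IsUcycle n 2 (dupFirsts [] w) := by
  obtain ⟨hne, hmem, hnd, hiff⟩ := hw
  have hlen : 0 < w.length := List.length_pos_iff.2 hne
  set w' := dupFirsts [] w with hw'
  have hne' : w' ≠ [] := by
    cases w with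
    | nil => exact absurd rfl hne
    | cons a l => rw [hw', dupFirsts]; split <;> simp
  -- n ≥ 2
  have hn2 : 2 ≤ n := by
    have h0 : cycWindow w 2 0 ∈ cycWindows w 2 :=
      List.mem_map_of_mem (List.mem_range.2 hlen)
    obtain ⟨hnd0, hc0, hm0⟩ := (hiff _).1 h0
    obtain ⟨x, y, hxy⟩ := Multiset.card_eq_two.1 hc0
    rw [hxy] at hnd0 hm0
    have hxny : x ≠ y := by
      intro h; subst h
      exact (Multiset.nodup_cons.1 hnd0).1 (Multiset.mem_cons_self _ _)
    have hx := hm0 x (by simp)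
    have hy := hm0 y (by simp)
    rw [Finset.mem_Icc] at hx hy
    omega
  -- each letter in Icc occurs in w
  have hocc : ∀ x ∈ Finset.Icc 1 n, x ∈ w := by
    intro x hx
    rw [Finset.mem_Icc] at hx
    set y := if x = 1 then 2 else 1 with hy
    have hxy : x ≠ y := by rw [hy]; split <;> omega
    have hyIcc : 1 ≤ y ∧ y ≤ n := by rw [hy]; split <;> omega
    have hmemw : ({x, y} : Multiset ℕ) ∈ cycWindows w 2 := by
      refine (hiff _).2 ⟨by simp [hxy], by simp, ?_⟩
      intro z hz
      rw [Finset.mem_Icc]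
      rcases Multiset.mem_cons.1 hz with rfl | hz
      · omega
      · rw [Multiset.mem_singleton] at hz; omega
    exact mem_of_mem_cycWindow w hne _ hmemw x (Multiset.mem_cons_self _ _)
  -- the permutation
  have hh : w'.getD 0 0 = w.getD 0 0 := by
    rw [← getD_zero_append w' 0 hne', ← getD_zero_append w 0 hne, hw', dupFirsts_head]
  have hperm : (cycWindows w' 2).Perm
      ((news [] w).map (fun x => ({x, x} : Multiset ℕ)) ++ cycWindows w 2) := by
    rw [cycWindows_eq_pairs w' hne', cycWindows_eq_pairs w hne, ← hh]
    exact pairs_dupFirsts _ w []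
  have hmem' : ∀ m : Multiset ℕ, m ∈ cycWindows w' 2 ↔
      (m ∈ (news [] w).map (fun x => ({x, x} : Multiset ℕ)) ∨ m ∈ cycWindows w 2) :=
    fun m => by rw [hperm.mem_iff, List.mem_append]
  refine ⟨hne', ?_, ?_, ?_⟩
  · intro x hx
    exact hmem x ((mem_dupFirsts w x []).1 hx)
  · rw [hperm.nodup_iff, List.nodup_append]
    refine ⟨?_, hnd, ?_⟩
    · refine List.Nodup.map ?_ (nodup_news w [])
      intro a b hab
      have hab' : ({a, a} : Multiset ℕ) = {b, b} := hab
      have : a ∈ ({b, b} : Multiset ℕ) := hab' ▸ Multiset.mem_cons_self a {a}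
      simpa using this
    · intro m hm1 m2 hm2 hEq
      subst hEq
      obtain ⟨x, _, rfl⟩ := List.mem_map.1 hm1
      have hnodup := ((hiff _).1 hm2).1
      simp [Multiset.nodup_cons] at hnodup
  · intro m
    rw [hmem' m]
    constructor
    · rintro (hm | hm)
      · obtain ⟨x, hx, rfl⟩ := List.mem_map.1 hm
        have hxw : x ∈ w := ((mem_news w x []).1 hx).1
        refine ⟨by simp, ?_⟩
        intro z hz
        have hzx : z = x := by simpa using hz
        subst hzx
        exact hmem z hxw
      · obtain ⟨_, hc, hm2⟩ := (hiff m).1 hm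
        exact ⟨hc, hm2⟩
    · rintro ⟨hc, helem⟩
      obtain ⟨x, y, rfl⟩ := Multiset.card_eq_two.1 hc
      rcases eq_or_ne x y with rfl | hxy
      · left
        refine List.mem_map.2 ⟨x, ?_, rfl⟩
        rw [mem_news]
        exact ⟨hocc x (helem x (Multiset.mem_cons_self _ _)), by simp⟩
      · right
        exact (hiff _).2 ⟨by simp [hxy], hc, helem⟩
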